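/- Every finite connected graph that is claw-free and paw-free and contains an induced subgraph isomorphic to the path on 4 vertices is isomorphic to a path or to a cycle. -/

import Mathlib

/-- The claw `K_{1,3}`. -/
def claw : SimpleGraph (Fin 1 ⊕ Fin 3) := completeBipartiteGraph (Fin 1) (Fin 3)

/-- The paw: a triangle (on `0, 1, 2`) with a pendant vertex (`3`, attached to `2`). -/
def paw : SimpleGraph (Fin 4) :=
  SimpleGraph.fromRel (fun a b =>
    (a = 0 ∧ b = 1) ∨ (a = 0 ∧ b = 2) ∨ (a = 1 ∧ b = 2) ∨ (a = 2 ∧ b = 3))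

open SimpleGraph List

section Aux

set_option linter.unusedSectionVars false
set_option linter.unreachableTactic false
set_option linter.unnecessarySeqFocus false
set_option linter.unusedTactic false

lemma stmt19_paw_lemma {V : Type*} {G : SimpleGraph V} (hpaw : IsEmpty (paw ↪g G))
    {x y z w : V} (hxy : G.Adj x y) (hxz : G.Adj x z) (hyz : G.Adj y z)
    (hxw : G.Adj x w) : w = y ∨ w = z ∨ G.Adj w y ∨ G.Adj w z := by
  by_contra h
  push_neg at h
  obtain ⟨h1, h2, h3, h4⟩ := h
  have hwx : w ≠ x := fun e => G.irrefl (e ▸ hxw)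
  have hyx : y ≠ x := fun e => G.irrefl (e ▸ hxy)
  have hzx : z ≠ x := fun e => G.irrefl (e ▸ hxz)
  have hyz' : y ≠ z := hyz.ne
  refine hpaw.false ⟨⟨![y, z, x, w], ?_⟩, ?_⟩
  · intro i j
    fin_cases i <;> fin_cases j <;> simp_all [Fin.ext_iff] <;> tauto
  · intro i j
    fin_cases i <;> fin_cases j <;>
      simp_all [paw, SimpleGraph.fromRel_adj, Fin.ext_iff, G.adj_comm, -Fin.val_eq_zero_iff] <;> tauto

lemma stmt19_claw_lemma {V : Type*} {G : SimpleGraph V} (hclaw : IsEmpty (claw ↪g G))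
    {v a b c : V} (hva : G.Adj v a) (hvb : G.Adj v b) (hvc : G.Adj v c)
    (hab : a ≠ b) (hac : a ≠ c) (hbc : b ≠ c)
    (nab : ¬ G.Adj a b) (nac : ¬ G.Adj a c) (nbc : ¬ G.Adj b c) : False := by
  have hav : a ≠ v := fun e => G.irrefl (e ▸ hva)
  have hbv : b ≠ v := fun e => G.irrefl (e ▸ hvb)
  have hcv : c ≠ v := fun e => G.irrefl (e ▸ hvc)
  refine hclaw.false ⟨⟨Sum.elim (fun _ => v) ![a, b, c], ?_⟩, ?_⟩
  · have hinj : Function.Injective (Sum.elim (fun (_ : Fin 1) => v) ![a, b, c]) := by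
      rintro (i | i) (j | j) h <;> simp_all
      · exact Subsingleton.elim i j
      · fin_cases i <;> fin_cases j <;> simp_all
      · fin_cases i <;> fin_cases j <;> simp_all
      · fin_cases i <;> fin_cases j <;> simp_all [Fin.ext_iff]
    exact hinj
  · rintro (i | i) (j | j) <;>
      simp_all [claw, G.adj_comm] <;> fin_cases i <;> try fin_cases j
    all_goals simp_all [G.adj_comm]

lemma stmt19_tri_prop {V : Type*} {G : SimpleGraph V} (hpaw : IsEmpty (paw ↪g G))
    {x y z w : V} (hxy : G.Adj x y) (hxz : G.Adj x z) (hyz : G.Adj y z)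
    (hxw : G.Adj x w) : ∃ p q, G.Adj w p ∧ G.Adj w q ∧ G.Adj p q := by
  rcases stmt19_paw_lemma hpaw hxy hxz hyz hxw with rfl | rfl | h | h
  · exact ⟨x, z, hxw.symm, hyz, hxz⟩
  · exact ⟨x, y, hxw.symm, hyz.symm, hxy⟩
  · exact ⟨x, y, hxw.symm, h, hxy⟩
  · exact ⟨x, z, hxw.symm, h, hxz⟩

lemma stmt19_tri_walk {V : Type*} {G : SimpleGraph V} (hpaw : IsEmpty (paw ↪g G)) :
    ∀ {u v : V}, G.Walk u v →
    (∃ p q, G.Adj u p ∧ G.Adj u q ∧ G.Adj p q) →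
    (∃ p q, G.Adj v p ∧ G.Adj v q ∧ G.Adj p q) := by
  intro u v w
  induction w with
  | nil => exact id
  | cons h p ih =>
    rintro ⟨p', q', h1, h2, h3⟩
    exact ih (stmt19_tri_prop hpaw h1 h2 h3 h)

lemma stmt19_triangle_free {V : Type*} {G : SimpleGraph V}
    (hconn : G.Connected) (hpaw : IsEmpty (paw ↪g G))
    (hP4 : Nonempty (SimpleGraph.pathGraph 4 ↪g G)) :
    ∀ x y z : V, G.Adj x y → G.Adj x z → G.Adj y z → False := by
  intro x y z hxy hxz hyz
  obtain ⟨e⟩ := hP4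
  set a := e 0 with ha; set b := e 1 with hb; set c := e 2 with hc; set d := e 3 with hd
  have adj : ∀ i j : Fin 4, G.Adj (e i) (e j) ↔ (SimpleGraph.pathGraph 4).Adj i j :=
    fun i j => e.map_adj_iff
  have hab : G.Adj a b := (adj 0 1).2 (by rw [pathGraph_adj]; decide)
  have hbc : G.Adj b c := (adj 1 2).2 (by rw [pathGraph_adj]; decide)
  have hcd : G.Adj c d := (adj 2 3).2 (by rw [pathGraph_adj]; decide)
  have nac : ¬ G.Adj a c := fun h => by
    have := (adj 0 2).1 h; rw [pathGraph_adj] at this; revert this; decide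
  have nad : ¬ G.Adj a d := fun h => by
    have := (adj 0 3).1 h; rw [pathGraph_adj] at this; revert this; decide
  have nbd : ¬ G.Adj b d := fun h => by
    have := (adj 1 3).1 h; rw [pathGraph_adj] at this; revert this; decide
  have hac : a ≠ c := fun h => by have := e.injective h; simp at this
  have had : a ≠ d := fun h => by have := e.injective h; simp at this
  have hbd : b ≠ d := fun h => by have := e.injective h; simp at this
  obtain ⟨wlk⟩ := hconn.preconnected x c
  obtain ⟨p, q, hcp, hcq, hpq⟩ := stmt19_tri_walk hpaw wlk ⟨y, z, hxy, hxz, hyz⟩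
  obtain ⟨w, hbw, hcw⟩ : ∃ w, G.Adj b w ∧ G.Adj c w := by
    rcases stmt19_paw_lemma hpaw hcp hcq hpq hbc.symm with rfl | rfl | h | h
    · exact ⟨q, hpq, hcq⟩
    · exact ⟨p, hpq.symm, hcp⟩
    · exact ⟨p, h, hcp⟩
    · exact ⟨q, h, hcq⟩
  have hwa : a ≠ w := fun h => nac (h ▸ hcw).symm
  have hwd : d ≠ w := fun h => nbd (h ▸ hbw)
  have haw : G.Adj a w := by
    rcases stmt19_paw_lemma hpaw hbc hbw hcw hab.symm with h | h | h | h
    · exact absurd h hac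
    · exact absurd h hwa
    · exact absurd h nac
    · exact h
  have hdw : G.Adj d w := by
    rcases stmt19_paw_lemma hpaw hbc.symm hcw hbw hcd with h | h | h | h
    · exact absurd h.symm hbd
    · exact absurd h hwd
    · exact absurd h.symm nbd
    · exact h
  rcases stmt19_paw_lemma hpaw haw.symm hbw.symm hab hdw.symm with h | h | h | h
  · exact had h.symm
  · exact hbd h.symm
  · exact nad h.symm
  · exact nbd h.symm

lemma stmt19_exists_max_chain {V : Type*} [Fintype V] {G : SimpleGraph V} (v0 : V) :
    ∃ l : List V, (l ≠ [] ∧ l.Nodup ∧ l.Chain' G.Adj) ∧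
      ∀ l' : List V, (l' ≠ [] ∧ l'.Nodup ∧ l'.Chain' G.Adj) → l'.length ≤ l.length := by
  classical
  set P : ℕ → Prop := fun n => ∃ l : List V, (l ≠ [] ∧ l.Nodup ∧ l.Chain' G.Adj) ∧ l.length = n
    with hP
  have h1 : P 1 := ⟨[v0], ⟨by simp, by simp, by simp [List.Chain']⟩, rfl⟩
  have hbdd : ∀ n, P n → n ≤ Fintype.card V := by
    rintro n ⟨l, ⟨-, hnd, -⟩, rfl⟩
    exact hnd.length_le_card
  have hle : 1 ≤ Fintype.card V := Fintype.card_pos_iff.2 ⟨v0⟩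
  obtain ⟨l, hl, hlen⟩ := Nat.findGreatest_spec hle h1
  refine ⟨l, hl, fun l' hl' => ?_⟩
  rw [hlen]
  exact Nat.le_findGreatest (hbdd _ ⟨l', hl', rfl⟩) ⟨l', hl', rfl⟩

lemma stmt19_edge_into_aux {V : Type*} {G : SimpleGraph V} {l : List V} :
    ∀ {u t : V}, G.Walk u t → t ∈ l → u ∉ l →
    ∃ y z, y ∉ l ∧ z ∈ l ∧ G.Adj y z := by
  intro u t w
  induction w with
  | nil => exact fun ht hu => absurd ht hu
  | @cons u u' _ h p ih =>
    intro ht hu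
    by_cases hu' : u' ∈ l
    · exact ⟨u, u', hu, hu', h⟩
    · exact ih ht hu'

lemma stmt19_edge_into {V : Type*} {G : SimpleGraph V} {l : List V}
    (hconn : G.Connected) {v : V} (hv : v ∉ l) (hne : l ≠ []) :
    ∃ y z, y ∉ l ∧ z ∈ l ∧ G.Adj y z :=
  stmt19_edge_into_aux (hconn.preconnected v (l.head hne)).some (List.head_mem hne) hv

lemma stmt19_chain'_iff_get {α : Type*} {R : α → α → Prop} {l : List α} :
    l.Chain' R ↔ ∀ (i : ℕ) (h : i < l.length - 1),
      R (l.get ⟨i, by omega⟩) (l.get ⟨i + 1, by omega⟩) := by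
  show List.IsChain R l ↔ _
  rw [List.isChain_iff_getElem]
  exact ⟨fun h i hi => h i (by omega), fun h i hi => h i (by omega)⟩

lemma stmt19_max_chain_covers {V : Type*} [Fintype V] {G : SimpleGraph V} (hconn : G.Connected)
    (hdeg : ∀ v a b c : V, G.Adj v a → G.Adj v b → G.Adj v c → a = b ∨ a = c ∨ b = c)
    {l : List V} (hne : l ≠ []) (hnd : l.Nodup) (hch : l.Chain' G.Adj)
    (hmax : ∀ l' : List V, (l' ≠ [] ∧ l'.Nodup ∧ l'.Chain' G.Adj) → l'.length ≤ l.length) :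
    ∀ v : V, v ∈ l := by
  by_contra h
  push_neg at h
  obtain ⟨v, hv⟩ := h
  obtain ⟨y, z, hy, hz, hyz⟩ := stmt19_edge_into hconn hv hne
  obtain ⟨⟨i, hi⟩, rfl⟩ := List.mem_iff_get.1 hz
  have hchain := stmt19_chain'_iff_get.1 hch
  have hinj : Function.Injective l.get := List.nodup_iff_injective_get.1 hnd
  rcases Nat.eq_zero_or_pos i with rfl | hipos
  · have hnodup : (y :: l).Nodup := List.nodup_cons.2 ⟨hy, hnd⟩
    have hchain' : (y :: l).Chain' G.Adj := by
      show List.IsChain _ _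
      rw [List.isChain_cons]
      refine ⟨?_, hch⟩
      intro h hh
      have heq : l.head? = some (l.get ⟨0, hi⟩) := by
        rw [List.head?_eq_head hne]
        simp [List.head_eq_getElem, List.get_eq_getElem]
      rw [heq] at hh
      cases hh
      exact hyz
    have := hmax (y :: l) ⟨by simp, hnodup, hchain'⟩
    simp at this
  · rcases Nat.lt_or_ge (i + 1) l.length with hilt | hige
    · have a1 : G.Adj (l.get ⟨i, hi⟩) (l.get ⟨i - 1, by omega⟩) := by
        have h0 := hchain (i - 1) (by omega)
        have e : i - 1 + 1 = i := by omega
        simp_rw [e] at h0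
        exact h0.symm
      have a2 : G.Adj (l.get ⟨i, hi⟩) (l.get ⟨i + 1, hilt⟩) := hchain i (by omega)
      have a3 : G.Adj (l.get ⟨i, hi⟩) y := hyz.symm
      rcases hdeg _ _ _ _ a1 a2 a3 with h | h | h
      · have h2 := hinj h; rw [Fin.mk.injEq] at h2; omega
      · exact hy (h ▸ List.get_mem l _)
      · exact hy (h ▸ List.get_mem l _)
    · have hlast : i = l.length - 1 := by omega
      subst hlast
      have hnodup : (l ++ [y]).Nodup := by
        rw [List.nodup_append']
        refine ⟨hnd, by simp, ?_⟩
        intro a ha hb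
        simp at hb
        subst hb
        exact hy ha
      have hchain' : (l ++ [y]).Chain' G.Adj := by
        show List.IsChain _ _
        rw [List.isChain_append]
        refine ⟨hch, by simp, ?_⟩
        intro x hx y' hy'
        simp at hy'
        subst hy'
        rw [List.getLast?_eq_getLast hne, List.getLast_eq_getElem] at hx
        cases hx
        simpa [List.get_eq_getElem] using hyz.symm
      have := hmax (l ++ [y]) ⟨by simp, hnodup, hchain'⟩
      simp at this

lemma stmt19_chord_lemma {V : Type*} {G : SimpleGraph V}
    (hdeg : ∀ v a b c : V, G.Adj v a → G.Adj v b → G.Adj v c → a = b ∨ a = c ∨ b = c)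
    {l : List V} (hnd : l.Nodup) (hch : l.Chain' G.Adj)
    {i j : ℕ} (hi : i < l.length) (hj : j < l.length) (hij : i < j)
    (hadj : G.Adj (l.get ⟨i, hi⟩) (l.get ⟨j, hj⟩)) :
    j = i + 1 ∨ (i = 0 ∧ j = l.length - 1) := by
  by_contra hcon
  push_neg at hcon
  obtain ⟨h1, h2⟩ := hcon
  have hchain := stmt19_chain'_iff_get.1 hch
  have hinj : Function.Injective l.get := List.nodup_iff_injective_get.1 hnd
  have hij1 : i + 1 < j := by omega
  rcases Nat.eq_zero_or_pos i with rfl | hipos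
  · have hjlt : j + 1 < l.length := by omega
    have a1 : G.Adj (l.get ⟨j, hj⟩) (l.get ⟨j - 1, by omega⟩) := by
      have h0 := hchain (j - 1) (by omega)
      have e : j - 1 + 1 = j := by omega
      simp_rw [e] at h0
      exact h0.symm
    have a2 : G.Adj (l.get ⟨j, hj⟩) (l.get ⟨j + 1, hjlt⟩) := hchain j (by omega)
    rcases hdeg _ _ _ _ a1 a2 hadj.symm with h | h | h <;>
      · have h2 := hinj h; rw [Fin.mk.injEq] at h2; omega
  · have a1 : G.Adj (l.get ⟨i, hi⟩) (l.get ⟨i - 1, by omega⟩) := by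
      have h0 := hchain (i - 1) (by omega)
      have e : i - 1 + 1 = i := by omega
      simp_rw [e] at h0
      exact h0.symm
    have a2 : G.Adj (l.get ⟨i, hi⟩) (l.get ⟨i + 1, by omega⟩) := hchain i (by omega)
    rcases hdeg _ _ _ _ a1 a2 hadj with h | h | h <;>
      · have h2 := hinj h; rw [Fin.mk.injEq] at h2; omega

lemma stmt19_fin_sub_val_one {n : ℕ} (hn : 2 ≤ n) (i j : Fin n) :
    (j - i).val = 1 ↔ (j.val = i.val + 1 ∨ (i.val = n - 1 ∧ j.val = 0)) := by
  rw [Fin.sub_def]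
  simp only
  have hi := i.isLt
  have hj := j.isLt
  rcases le_or_gt i.val j.val with hle | hlt
  · rw [show n - i.val + j.val = (j.val - i.val) + n by omega, Nat.add_mod_right,
      Nat.mod_eq_of_lt (by omega)]
    omega
  · rw [Nat.mod_eq_of_lt (by omega)]
    omega

lemma stmt19_classify {V : Type*} [Fintype V] {G : SimpleGraph V} (hconn : G.Connected)
    (hdeg : ∀ v a b c : V, G.Adj v a → G.Adj v b → G.Adj v c → a = b ∨ a = c ∨ b = c)
    (hcard : 4 ≤ Fintype.card V) :
    (∃ n : ℕ, Nonempty (G ≃g SimpleGraph.pathGraph n)) ∨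
    (∃ n : ℕ, 3 ≤ n ∧ Nonempty (G ≃g SimpleGraph.cycleGraph n)) := by
  have : Nonempty V := Fintype.card_pos_iff.1 (by omega)
  obtain ⟨v0⟩ := this
  obtain ⟨l, ⟨hne, hnd, hch⟩, hmax⟩ := stmt19_exists_max_chain (G := G) v0
  have hcov : ∀ v : V, v ∈ l := stmt19_max_chain_covers hconn hdeg hne hnd hch hmax
  have hchain := stmt19_chain'_iff_get.1 hch
  have hinj : Function.Injective l.get := List.nodup_iff_injective_get.1 hnd
  have hsurj : Function.Surjective l.get := by
    intro v
    obtain ⟨k, hk⟩ := List.mem_iff_get.1 (hcov v)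
    exact ⟨k, hk⟩
  set n := l.length with hn
  have hn4 : 4 ≤ n := by
    calc 4 ≤ Fintype.card V := hcard
    _ ≤ Fintype.card (Fin n) := Fintype.card_le_of_surjective _ hsurj
    _ = n := Fintype.card_fin n
  set f : Fin n ≃ V := Equiv.ofBijective l.get ⟨hinj, hsurj⟩ with hf
  have hfget : ∀ i : Fin n, f i = l.get i := fun i => rfl
  have chord : ∀ i j : Fin n, G.Adj (l.get i) (l.get j) →
      j.val = i.val + 1 ∨ i.val = j.val + 1 ∨
      (i.val = 0 ∧ j.val = n - 1) ∨ (j.val = 0 ∧ i.val = n - 1) := by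
    intro i j hadj
    have hij : i ≠ j := fun h => G.irrefl (h ▸ hadj)
    rcases lt_or_gt_of_ne (fun h => hij (Fin.ext h) : i.val ≠ j.val) with hlt | hlt
    · have h0 : G.Adj (l.get ⟨i.val, i.isLt⟩) (l.get ⟨j.val, j.isLt⟩) := by
        convert hadj using 2 <;> apply Fin.ext <;> rfl
      rcases stmt19_chord_lemma hdeg hnd hch i.isLt j.isLt hlt h0 with h | h
      · left; omega
      · right; right; left; omega
    · have h0 : G.Adj (l.get ⟨j.val, j.isLt⟩) (l.get ⟨i.val, i.isLt⟩) := by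
        convert hadj.symm using 2 <;> apply Fin.ext <;> rfl
      rcases stmt19_chord_lemma hdeg hnd hch j.isLt i.isLt hlt h0 with h | h
      · right; left; omega
      · right; right; right; omega
  have consec : ∀ i j : Fin n, j.val = i.val + 1 → G.Adj (l.get i) (l.get j) := by
    intro i j h
    have h0 := hchain i.val (by omega)
    convert h0 using 2 <;> apply Fin.ext <;> simp only [Fin.val_mk] <;> omega
  by_cases hend : G.Adj (l.get ⟨0, by omega⟩) (l.get ⟨n - 1, by omega⟩)
  · right
    refine ⟨n, by omega, ⟨?_⟩⟩
    refine (RelIso.mk f ?_).symm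
    intro i j
    rw [hfget, hfget, cycleGraph_adj']
    rw [stmt19_fin_sub_val_one (by omega : 2 ≤ n) j i,
      stmt19_fin_sub_val_one (by omega : 2 ≤ n) i j]
    constructor
    · intro hadj
      rcases chord i j hadj with h | h | h | h
      · right; left; omega
      · left; left; omega
      · left; right; omega
      · right; right; omega
    · intro hadj
      rcases hadj with (h | h) | (h | h)
      · exact (consec j i (by omega)).symm
      · convert hend using 2 <;> apply Fin.ext <;> simp only [Fin.val_mk] <;> omega
      · exact consec i j (by omega)
      · convert hend.symm using 2 <;> apply Fin.ext <;> simp only [Fin.val_mk] <;> omega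
  · left
    refine ⟨n, ⟨?_⟩⟩
    refine (RelIso.mk f ?_).symm
    intro i j
    rw [hfget, hfget, pathGraph_adj]
    constructor
    · intro hadj
      rcases chord i j hadj with h | h | h | h
      · left; omega
      · right; omega
      · exfalso
        apply hend
        convert hadj using 2 <;> apply Fin.ext <;> simp only [Fin.val_mk] <;> omega
      · exfalso
        apply hend
        convert hadj.symm using 2 <;> apply Fin.ext <;> simp only [Fin.val_mk] <;> omega
    · intro hadj
      rcases hadj with h | h
      · exact consec i j (by omega)
      · exact (consec j i (by omega)).symm

end Aux

/-- every finite connected claw-free and paw-free graph containing an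
induced path on 4 vertices is isomorphic to a path or to a cycle. -/
theorem stmt19 {V : Type*} [Fintype V] (G : SimpleGraph V)
    (hconn : G.Connected)
    (hclaw : IsEmpty (claw ↪g G))
    (hpaw : IsEmpty (paw ↪g G))
    (hP4 : Nonempty (SimpleGraph.pathGraph 4 ↪g G)) :
    (∃ n : ℕ, Nonempty (G ≃g SimpleGraph.pathGraph n)) ∨
    (∃ n : ℕ, 3 ≤ n ∧ Nonempty (G ≃g SimpleGraph.cycleGraph n)) := by
  have htf := stmt19_triangle_free hconn hpaw hP4
  have hdeg : ∀ v a b c : V, G.Adj v a → G.Adj v b → G.Adj v c → a = b ∨ a = c ∨ b = c := by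
    intro v a b c hva hvb hvc
    by_contra h
    push_neg at h
    obtain ⟨hab, hac, hbc⟩ := h
    exact stmt19_claw_lemma hclaw hva hvb hvc hab hac hbc
      (fun h => htf v a b hva hvb h)
      (fun h => htf v a c hva hvc h)
      (fun h => htf v b c hvb hvc h)
  have hcard : 4 ≤ Fintype.card V := by
    obtain ⟨e⟩ := hP4
    simpa using Fintype.card_le_of_embedding e.toEmbedding
  exact stmt19_classify hconn hdeg hcard
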